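/- For every x₀ ∈ ℂ with ∏_{i=1}^s (x₀−r_i) ≠ 0, the fiber {(y,z) ∈ ℂ² : F(x₀,y,z) = 0} is exactly the graph {(y, (Σ_{i=1}^s (∏_{j≠i}(x₀−r_j))·y^{p_i} + ∏_{i=1}^s (x₀−r_i)) / ∏_{i=1}^s (x₀−r_i)^{m_i}) : y ∈ ℂ}; and for every index i, the fiber {(y,z) ∈ ℂ² : F(r_i,y,z) = 0} equals the line {(0,z) : z ∈ ℂ}. In particular, every set-theoretic fiber of the projection pr_x : S_{s,[m][p]} → ℂ is in bijection with ℂ. -/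

import Mathlib

/-- Description of the set-theoretic fibers of the projection `pr_x : S_{s,[m][p]} → ℂ`:
over a point `x₀` which is not one of the `rᵢ` the fiber is the graph of an explicit
rational function of `y`, over `rᵢ` it is the line `{y = 0}`; in particular every
fiber is in bijection with `ℂ`. -/
theorem fake_plane_negKodaira_hypersurface_fibers
    (s : ℕ) (hs : 1 ≤ s)
    (m : Fin s → ℕ) (hm : ∀ i, 2 ≤ m i)
    (p : Fin s → ℕ) (hpodd : ∀ i, Odd (p i)) (hp3 : ∀ i, 3 ≤ p i)
    (r : Fin s → ℝ) (hr : Function.Injective r)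
    (F : ℂ → ℂ → ℂ → ℂ)
    (hF : ∀ x y z : ℂ, F x y z =
      (∏ i, (x - (r i : ℂ)) ^ m i) * z
        - (∑ i, (∏ j ∈ Finset.univ.erase i, (x - (r j : ℂ))) * y ^ p i)
        - ∏ i, (x - (r i : ℂ))) :
    (∀ x₀ : ℂ, (∏ i, (x₀ - (r i : ℂ))) ≠ 0 →
      {yz : ℂ × ℂ | F x₀ yz.1 yz.2 = 0} =
        Set.range (fun y : ℂ =>
          (y, ((∑ i, (∏ j ∈ Finset.univ.erase i, (x₀ - (r j : ℂ))) * y ^ p i)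
                + ∏ i, (x₀ - (r i : ℂ))) / ∏ i, (x₀ - (r i : ℂ)) ^ m i))) ∧
    (∀ i : Fin s,
      {yz : ℂ × ℂ | F ((r i : ℂ)) yz.1 yz.2 = 0} = {yz : ℂ × ℂ | yz.1 = 0}) ∧
    (∀ x₀ : ℂ, Nonempty (ℂ ≃ {yz : ℂ × ℂ // F x₀ yz.1 yz.2 = 0})) := by
  have key1 : ∀ x₀ : ℂ, (∏ i, (x₀ - (r i : ℂ))) ≠ 0 →
      {yz : ℂ × ℂ | F x₀ yz.1 yz.2 = 0} =
        Set.range (fun y : ℂ =>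
          (y, ((∑ i, (∏ j ∈ Finset.univ.erase i, (x₀ - (r j : ℂ))) * y ^ p i)
                + ∏ i, (x₀ - (r i : ℂ))) / ∏ i, (x₀ - (r i : ℂ)) ^ m i)) := by
    intro x₀ hx
    rw [Finset.prod_ne_zero_iff] at hx
    have hxm : (∏ i, (x₀ - (r i : ℂ)) ^ m i) ≠ 0 := by
      rw [Finset.prod_ne_zero_iff]
      exact fun i hi => pow_ne_zero _ (hx i hi)
    ext yz
    simp only [Set.mem_setOf_eq, Set.mem_range, hF]
    constructor
    · intro h
      refine ⟨yz.1, ?_⟩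
      have hz : yz.2 = ((∑ i, (∏ j ∈ Finset.univ.erase i, (x₀ - (r j : ℂ))) * yz.1 ^ p i)
                + ∏ i, (x₀ - (r i : ℂ))) / ∏ i, (x₀ - (r i : ℂ)) ^ m i := by
        rw [eq_div_iff hxm]
        linear_combination h
      exact Prod.ext rfl hz.symm
    · rintro ⟨y, hy⟩
      rw [← hy]
      simp only
      field_simp
      ring
  have hrC : ∀ i j : Fin s, i ≠ j → ((r i : ℂ)) - (r j : ℂ) ≠ 0 := by
    intro i j hij h
    rw [sub_eq_zero] at h
    exact hij (hr (by exact_mod_cast h))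
  have key2 : ∀ i : Fin s,
      {yz : ℂ × ℂ | F ((r i : ℂ)) yz.1 yz.2 = 0} = {yz : ℂ × ℂ | yz.1 = 0} := by
    intro i
    have h1 : (∏ j, ((r i : ℂ) - (r j : ℂ)) ^ m j) = 0 :=
      Finset.prod_eq_zero (Finset.mem_univ i) (by
        rw [sub_self]
        exact zero_pow (by have := hm i; omega : m i ≠ 0))
    have h2 : (∏ j, ((r i : ℂ) - (r j : ℂ))) = 0 :=
      Finset.prod_eq_zero (Finset.mem_univ i) (sub_self _)
    have hc : (∏ j ∈ Finset.univ.erase i, ((r i : ℂ) - (r j : ℂ))) ≠ 0 := by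
      rw [Finset.prod_ne_zero_iff]
      intro j hj
      exact hrC i j (fun h => (Finset.mem_erase.mp hj).1 h.symm)
    ext yz
    simp only [Set.mem_setOf_eq, hF, h1, h2, zero_mul, zero_sub, sub_zero, neg_eq_zero]
    have hsum : ∀ y : ℂ, (∑ k, (∏ j ∈ Finset.univ.erase k, ((r i : ℂ) - (r j : ℂ))) * y ^ p k)
        = (∏ j ∈ Finset.univ.erase i, ((r i : ℂ) - (r j : ℂ))) * y ^ p i := by
      intro y
      refine Finset.sum_eq_single i (fun k _ hk => ?_) (fun h => absurd (Finset.mem_univ i) h)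
      have : (∏ j ∈ Finset.univ.erase k, ((r i : ℂ) - (r j : ℂ))) = 0 :=
        Finset.prod_eq_zero (Finset.mem_erase.mpr ⟨fun h => hk h.symm, Finset.mem_univ i⟩) (sub_self _)
      rw [this, zero_mul]
    rw [hsum]
    constructor
    · intro h
      rcases mul_eq_zero.mp h with h' | h'
      · exact absurd h' hc
      · exact pow_eq_zero_iff (by have := hp3 i; omega : p i ≠ 0) |>.mp h'
    · intro h
      rw [h, zero_pow (by have := hp3 i; omega : p i ≠ 0), mul_zero]
  refine ⟨key1, key2, ?_⟩
  intro x₀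
  by_cases hx : (∏ i, (x₀ - (r i : ℂ))) ≠ 0
  · have hg : Function.Injective (fun y : ℂ =>
        ((y, ((∑ i, (∏ j ∈ Finset.univ.erase i, (x₀ - (r j : ℂ))) * y ^ p i)
                + ∏ i, (x₀ - (r i : ℂ))) / ∏ i, (x₀ - (r i : ℂ)) ^ m i) : ℂ × ℂ)) := by
      intro a b hab
      exact congrArg Prod.fst hab
    exact ⟨(Equiv.ofInjective _ hg).trans (Equiv.setCongr (key1 x₀ hx).symm)⟩
  · push_neg at hx
    rw [Finset.prod_eq_zero_iff] at hx
    obtain ⟨i, -, hi⟩ := hx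
    have hx₀ : x₀ = (r i : ℂ) := by rwa [sub_eq_zero] at hi
    have hg : Function.Injective (fun z : ℂ => (((0 : ℂ), z) : ℂ × ℂ)) := by
      intro a b hab
      exact congrArg Prod.snd hab
    have hrange : Set.range (fun z : ℂ => (((0 : ℂ), z) : ℂ × ℂ)) = {yz : ℂ × ℂ | yz.1 = 0} := by
      ext yz
      constructor
      · rintro ⟨z, rfl⟩
        rfl
      · intro h
        exact ⟨yz.2, by ext <;> simp [h.symm]⟩
    rw [hx₀]
    exact ⟨(Equiv.ofInjective _ hg).trans (Equiv.setCongr (hrange.trans (key2 i).symm))⟩
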